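/- Let v₁,…,v₅ be trace-zero 2×2 complex matrices and r_{i₁⋯i_h} = -tr(v_{i₁}⋯v_{i_h}). Then r_{45}·r_{123} - r_{13}·r_{245} + r_{12}·r_{345} = r_{15}·r_{234} + r_{34}·r_{125} - r_{24}·r_{135}. -/
import Mathlib


open Matrix

theorem stmt_6 (v₁ v₂ v₃ v₄ v₅ : Matrix (Fin 2) (Fin 2) ℂ)
    (h₁ : trace v₁ = 0) (h₂ : trace v₂ = 0) (h₃ : trace v₃ = 0) (h₄ : trace v₄ = 0)
    (h₅ : trace v₅ = 0) :
    (-(trace (v₄ * v₅))) * (-(trace (v₁ * v₂ * v₃)))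
        - (-(trace (v₁ * v₃))) * (-(trace (v₂ * v₄ * v₅)))
        + (-(trace (v₁ * v₂))) * (-(trace (v₃ * v₄ * v₅))) =
      (-(trace (v₁ * v₅))) * (-(trace (v₂ * v₃ * v₄)))
        + (-(trace (v₃ * v₄))) * (-(trace (v₁ * v₂ * v₅)))
        - (-(trace (v₂ * v₄))) * (-(trace (v₁ * v₃ * v₅))) := by
  have e₁ : v₁ 1 1 = -v₁ 0 0 := by
    simp [Matrix.trace, Fin.sum_univ_two] at h₁; linear_combination h₁
  have e₂ : v₂ 1 1 = -v₂ 0 0 := by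
    simp [Matrix.trace, Fin.sum_univ_two] at h₂; linear_combination h₂
  have e₃ : v₃ 1 1 = -v₃ 0 0 := by
    simp [Matrix.trace, Fin.sum_univ_two] at h₃; linear_combination h₃
  have e₄ : v₄ 1 1 = -v₄ 0 0 := by
    simp [Matrix.trace, Fin.sum_univ_two] at h₄; linear_combination h₄
  have e₅ : v₅ 1 1 = -v₅ 0 0 := by
    simp [Matrix.trace, Fin.sum_univ_two] at h₅; linear_combination h₅
  simp only [Matrix.trace, Matrix.mul_apply, Fin.sum_univ_two, Matrix.diag_apply,
    e₁, e₂, e₃, e₄, e₅]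
  ring
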